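/- Let $\bar M$ be symmetric with $0\preceq \bar M\preceq I$ and define $N_0=\bar M$, $N_{t+1}=N_t(I-2\bar M)+\|N_t\|\cdot\bar M$. Then for every $t\ge0$, $N_t \succeq \bar M (I-\bar M)^t$; consequently $\|N_t\| \ge \max_k \rho_k(1-\rho_k)^t$ where $\rho_1,\dots,\rho_n$ are the eigenvalues of $\bar M$. -/

import Mathlib

open scoped Matrix.Norms.L2Operator

open Matrix in
/-- Two matrices that agree on the eigenvector basis of a Hermitian matrix are equal. -/
private lemma MRL.ext_basis {n : ℕ} {M : Matrix (Fin n) (Fin n) ℝ} (hM : M.IsHermitian)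
    (A B : Matrix (Fin n) (Fin n) ℝ)
    (h : ∀ k, A *ᵥ ⇑(hM.eigenvectorBasis k) = B *ᵥ ⇑(hM.eigenvectorBasis k)) : A = B := by
  have hU : A * (hM.eigenvectorUnitary : Matrix (Fin n) (Fin n) ℝ)
      = B * (hM.eigenvectorUnitary : Matrix (Fin n) (Fin n) ℝ) := by
    ext i k
    have := congrFun (h k) i
    simpa [Matrix.mul_apply, Matrix.mulVec, dotProduct] using this
  have h1 : (hM.eigenvectorUnitary : Matrix (Fin n) (Fin n) ℝ)
      * star (hM.eigenvectorUnitary : Matrix (Fin n) (Fin n) ℝ) = 1 :=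
    Unitary.mul_star_self_of_mem hM.eigenvectorUnitary.2
  calc A = A * ((hM.eigenvectorUnitary : Matrix (Fin n) (Fin n) ℝ)
        * star (hM.eigenvectorUnitary : Matrix (Fin n) (Fin n) ℝ)) := by rw [h1, mul_one]
    _ = B * ((hM.eigenvectorUnitary : Matrix (Fin n) (Fin n) ℝ)
        * star (hM.eigenvectorUnitary : Matrix (Fin n) (Fin n) ℝ)) := by
        rw [← mul_assoc, ← mul_assoc, hU]
    _ = B := by rw [h1, mul_one]

open Matrix in
/-- A matrix acting diagonally on the eigenvector basis with nonnegative coefficients is PSD. -/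
private lemma MRL.psd_of_basis {n : ℕ} {M : Matrix (Fin n) (Fin n) ℝ} (hM : M.IsHermitian)
    (A : Matrix (Fin n) (Fin n) ℝ) (d : Fin n → ℝ) (hd : ∀ k, 0 ≤ d k)
    (h : ∀ k, A *ᵥ ⇑(hM.eigenvectorBasis k) = d k • ⇑(hM.eigenvectorBasis k)) :
    A.PosSemidef := by
  have hrep : A = (hM.eigenvectorUnitary : Matrix (Fin n) (Fin n) ℝ) * Matrix.diagonal d
      * star (hM.eigenvectorUnitary : Matrix (Fin n) (Fin n) ℝ) := by
    apply MRL.ext_basis hM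
    intro k
    rw [h k, ← Matrix.mulVec_mulVec, ← Matrix.mulVec_mulVec,
      Matrix.IsHermitian.star_eigenvectorUnitary_mulVec, Matrix.diagonal_mulVec_single]
    have : (Pi.single k (d k * 1) : Fin n → ℝ) = d k • (Pi.single k 1 : Fin n → ℝ) := by
      funext i
      by_cases hi : i = k
      · subst hi; simp
      · simp [Pi.single_apply, hi]
    rw [this, Matrix.mulVec_smul, Matrix.IsHermitian.eigenvectorUnitary_mulVec]
  rw [hrep, Matrix.star_eq_conjTranspose]
  exact (Matrix.PosSemidef.diagonal hd).mul_mul_conjTranspose_same _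

open Matrix in
/-- An eigenvalue of a matrix (w.r.t. a unit vector) is bounded by the L2 operator norm. -/
private lemma MRL.abs_le_norm {n : ℕ} (A : Matrix (Fin n) (Fin n) ℝ)
    (x : EuclideanSpace ℝ (Fin n)) (hx : ‖x‖ = 1) (c : ℝ) (h : A *ᵥ ⇑x = c • ⇑x) :
    |c| ≤ ‖A‖ := by
  have h1 := Matrix.l2_opNorm_mulVec A x
  rw [hx, mul_one] at h1
  have h2 : (EuclideanSpace.equiv (Fin n) ℝ).symm (A *ᵥ x) = c • x := by
    ext i
    exact congrFun h i
  rw [h2, norm_smul, hx, mul_one, Real.norm_eq_abs] at h1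
  exact h1

/-- scalar recursion -/
private noncomputable def MRL.g {n : ℕ} (ρ : Fin n → ℝ) (c : ℕ → ℝ) : ℕ → Fin n → ℝ
  | 0 => ρ
  | (t+1) => fun k => MRL.g ρ c t k * (1 - 2 * ρ k) + c t * ρ k

open Matrix

/-- for the recursion `N₀ = M̄`, `N_{t+1} = N_t (I - 2M̄) + ‖N_t‖ M̄`,
one has `N_t ⪰ M̄ (I - M̄)^t` for all `t`, and consequently
`‖N_t‖ ≥ ρ_k (1 - ρ_k)^t` for every eigenvalue `ρ_k` of `M̄`. -/
theorem matrix_recursion_lower {n : ℕ}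
    (Mbar : Matrix (Fin n) (Fin n) ℝ)
    (hM0 : Mbar.PosSemidef) (hM1 : (1 - Mbar).PosSemidef)
    (N : ℕ → Matrix (Fin n) (Fin n) ℝ)
    (hN0 : N 0 = Mbar)
    (hNrec : ∀ t : ℕ, N (t + 1) = N t * (1 - (2 : ℝ) • Mbar) + ‖N t‖ • Mbar) :
    ∀ t : ℕ,
      (N t - Mbar * (1 - Mbar) ^ t).PosSemidef ∧
      ∀ k : Fin n,
        hM0.isHermitian.eigenvalues k * (1 - hM0.isHermitian.eigenvalues k) ^ t ≤
          ‖N t‖ := by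
  classical
  set hH := hM0.isHermitian with hHdef
  set ρ : Fin n → ℝ := hH.eigenvalues with hρdef
  set v : Fin n → EuclideanSpace ℝ (Fin n) := fun k => hH.eigenvectorBasis k with hvdef
  have hnorm_v : ∀ k, ‖v k‖ = 1 := fun k => hH.eigenvectorBasis.orthonormal.1 k
  have hMv : ∀ k, Mbar *ᵥ ⇑(v k) = ρ k • ⇑(v k) := fun k => hH.mulVec_eigenvectorBasis k
  -- eigenvalue bounds
  have hρ0 : ∀ k, 0 ≤ ρ k := fun k => hM0.eigenvalues_nonneg k
  have hdot : ∀ k, dotProduct (⇑(v k)) (⇑(v k)) = 1 := by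
    intro k
    have := real_inner_self_eq_norm_sq (v k)
    rw [hnorm_v k, one_pow] at this
    rw [← this]
    rw [EuclideanSpace.inner_eq_star_dotProduct, star_trivial]
  have hρ1 : ∀ k, ρ k ≤ 1 := by
    intro k
    have h2 := hM1.dotProduct_mulVec_nonneg ⇑(v k)
    have h3 : (1 - Mbar) *ᵥ ⇑(v k) = (1 - ρ k) • ⇑(v k) := by
      rw [Matrix.sub_mulVec, Matrix.one_mulVec, hMv k, sub_smul, one_smul]
    rw [h3, star_trivial, dotProduct_smul, hdot k, smul_eq_mul, mul_one] at h2
    linarith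
  -- the scalar sequence
  set c : ℕ → ℝ := fun t => ‖N t‖ with hcdef
  set g : ℕ → Fin n → ℝ := MRL.g ρ c with hgdef
  -- invariant: N t acts diagonally with coefficients g t
  have hinv : ∀ t k, N t *ᵥ ⇑(v k) = g t k • ⇑(v k) := by
    intro t
    induction t with
    | zero => intro k; rw [hN0]; exact hMv k
    | succ t ih =>
      intro k
      rw [hNrec t, Matrix.add_mulVec, Matrix.smul_mulVec, hMv k,
        ← Matrix.mulVec_mulVec, Matrix.sub_mulVec, Matrix.one_mulVec,
        Matrix.smul_mulVec, hMv k]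
      have h4 : ⇑(v k) - (2:ℝ) • ρ k • ⇑(v k) = (1 - 2 * ρ k) • ⇑(v k) := by
        rw [smul_smul, sub_smul, one_smul]
      rw [h4, Matrix.mulVec_smul, ih k]
      show (1 - 2 * ρ k) • g t k • ⇑(v k) + c t • ρ k • ⇑(v k)
        = (g t k * (1 - 2 * ρ k) + c t * ρ k) • ⇑(v k)
      rw [smul_smul, smul_smul, add_smul, mul_comm]
  -- eigenvalues bounded by norm
  have hgn : ∀ t k, g t k ≤ c t := by
    intro t k
    have := MRL.abs_le_norm (N t) (v k) (hnorm_v k) (g t k) (hinv t k)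
    exact (le_abs_self _).trans this
  -- scalar lower bound
  have hlow : ∀ t k, ρ k * (1 - ρ k) ^ t ≤ g t k := by
    intro t
    induction t with
    | zero => intro k; simp [hgdef, MRL.g]
    | succ t ih =>
      intro k
      have h1 := ih k
      have h2 := hgn t k
      have h3 := hρ0 k
      have h4 := hρ1 k
      show ρ k * (1 - ρ k) ^ (t+1) ≤ g t k * (1 - 2 * ρ k) + c t * ρ k
      have hpow : ρ k * (1 - ρ k) ^ (t+1) = (ρ k * (1 - ρ k) ^ t) * (1 - ρ k) := by ring
      nlinarith [mul_nonneg (sub_nonneg.mpr h1) (sub_nonneg.mpr h4),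
        mul_nonneg (sub_nonneg.mpr h2) h3]
  -- action of Mbar * (1 - Mbar)^t
  have hpowv : ∀ t k, (1 - Mbar) ^ t *ᵥ ⇑(v k) = (1 - ρ k) ^ t • ⇑(v k) := by
    intro t
    induction t with
    | zero => intro k; simp
    | succ t ih =>
      intro k
      rw [pow_succ, ← Matrix.mulVec_mulVec, Matrix.sub_mulVec, Matrix.one_mulVec, hMv k]
      have h4 : ⇑(v k) - ρ k • ⇑(v k) = (1 - ρ k) • ⇑(v k) := by
        rw [sub_smul, one_smul]
      rw [h4, Matrix.mulVec_smul, ih k, smul_smul, pow_succ]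
      ring_nf
  have hMpowv : ∀ t k, (Mbar * (1 - Mbar) ^ t) *ᵥ ⇑(v k) = (ρ k * (1 - ρ k) ^ t) • ⇑(v k) := by
    intro t k
    rw [← Matrix.mulVec_mulVec, hpowv t k, Matrix.mulVec_smul, hMv k, smul_smul, mul_comm]
  -- conclude
  intro t
  constructor
  · apply MRL.psd_of_basis hH _ (fun k => g t k - ρ k * (1 - ρ k) ^ t)
      (fun k => sub_nonneg.mpr (hlow t k))
    intro k
    rw [Matrix.sub_mulVec, hinv t k, hMpowv t k, sub_smul]
  · intro k
    exact le_trans (hlow t k) (hgn t k)
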